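/- Assume the Euclidean QST holds in ℝ^d with constant r ∈ (0,1]. Let C be a subset of the open northern hemisphere of S^d whose spherical convex hull contains the cap C(e_{d+1}, ρ) for some ρ ∈ (0, π/2). Then there exists a subset C' of C of at most 2d points whose spherical convex hull contains the cap C(e_{d+1}, (r/2)·ρ). -/

import Mathlib

open Real Set
open scoped RealInnerProductSpace

noncomputable section

/-- Euclidean space `ℝ^n`. -/
abbrev E (n : ℕ) := EuclideanSpace ℝ (Fin n)

/-- The unit sphere `S^{n-1} ⊆ ℝ^n`. -/
def unitSphere (n : ℕ) : Set (E n) := Metric.sphere 0 1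

/-- The spherical cap with center `v` and spherical radius `ρ`. -/
def cap {n : ℕ} (v : E n) (ρ : ℝ) : Set (E n) := {u ∈ unitSphere n | Real.cos ρ ≤ ⟪u, v⟫}

/-- The last standard basis vector `e_{d+1}` of `ℝ^{d+1}`. -/
def eLast (d : ℕ) : E (d + 1) := EuclideanSpace.single (Fin.last d) 1

/-- Central projection from the origin onto the hyperplane `{x : x_{d+1} = 1}`,
identified with `ℝ^d` (with origin `e_{d+1}`). -/
def PN {d : ℕ} (x : E (d + 1)) : E d := WithLp.toLp 2 (fun i : Fin d => x i.castSucc / x (Fin.last d))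

/-- Points of the shorter great-circle arc between unit vectors `u` and `v`
(for `u`, `v` in an open hemisphere): normalized nonnegative combinations. -/
def arcPts {n : ℕ} (u v : E n) : Set (E n) :=
  {w | ∃ a b : ℝ, 0 ≤ a ∧ 0 ≤ b ∧ a • u + b • v ≠ 0 ∧ w = ‖a • u + b • v‖⁻¹ • (a • u + b • v)}

/-- A set `K ⊆ S^{n-1}` is spherically convex if it is the whole sphere, or it is
contained in an open hemisphere and contains the shorter arc between any two of its points. -/
def IsSphConvex {n : ℕ} (K : Set (E n)) : Prop :=
  K = unitSphere n ∨
    ((∃ v : E n, ∀ x ∈ K, 0 < ⟪x, v⟫) ∧ ∀ u ∈ K, ∀ w ∈ K, arcPts u w ⊆ K)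

/-- The spherical convex hull: the intersection of all spherically convex subsets
of the sphere containing `C`. -/
def sconv {n : ℕ} (C : Set (E n)) : Set (E n) :=
  ⋂₀ {K | IsSphConvex K ∧ K ⊆ unitSphere n ∧ C ⊆ K}

/-- The polar of a set `S ⊆ ℝ^n`. -/
def polar {n : ℕ} (S : Set (E n)) : Set (E n) := {x | ∀ s ∈ S, ⟪x, s⟫ ≤ 1}

end

section Aux
variable {n d : ℕ}

lemma normsq (x : E n) : ‖x‖^2 = ∑ i, x i ^ 2 := by
  rw [EuclideanSpace.norm_eq, Real.sq_sqrt (by positivity)]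
  exact Finset.sum_congr rfl (by simp [Real.norm_eq_abs, sq_abs])

lemma inner_eLast (u : E (d+1)) : ⟪u, eLast d⟫ = u (Fin.last d) := by
  simp [eLast, EuclideanSpace.inner_single_right]

lemma mem_unitSphere {x : E n} : x ∈ unitSphere n ↔ ‖x‖ = 1 := by
  simp [unitSphere]

lemma PN_smul {c : ℝ} (hc : c ≠ 0) (x : E (d+1)) : PN (c • x) = PN x := by
  ext i
  show (c • x) i.castSucc / (c • x) (Fin.last d) = _
  rw [PiLp.smul_apply, PiLp.smul_apply, smul_eq_mul, smul_eq_mul,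
    mul_div_mul_left _ _ hc]
  rfl

/-- Linear embedding of `ℝ^d` into `ℝ^{d+1}` with last coordinate 0. -/
noncomputable def ext0 : E d →ₗ[ℝ] E (d+1) where
  toFun y := WithLp.toLp 2 (fun i => Fin.lastCases (motive := fun _ => ℝ) 0 (fun j => y j) i)
  map_add' x y := by
    ext i
    induction i using Fin.lastCases with
    | last => simp
    | cast j => simp [PiLp.add_apply]
  map_smul' c x := by
    ext i
    induction i using Fin.lastCases with
    | last => simp
    | cast j => simp [PiLp.smul_apply]

/-- The affine lift `y ↦ (y, 1)`. -/
noncomputable def liftE (y : E d) : E (d+1) := ext0 y + eLast d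

lemma eLast_castSucc (j : Fin d) : eLast d j.castSucc = 0 := by
  simp [eLast, EuclideanSpace.single_apply, (Fin.castSucc_lt_last j).ne]

lemma eLast_last : eLast d (Fin.last d) = 1 := by
  simp [eLast, EuclideanSpace.single_apply]

lemma ext0_castSucc (y : E d) (j : Fin d) : ext0 y j.castSucc = y j := by
  simp [ext0]

lemma ext0_last (y : E d) : ext0 y (Fin.last d) = 0 := by
  simp [ext0]

lemma liftE_castSucc (y : E d) (j : Fin d) : liftE y j.castSucc = y j := by
  rw [liftE, PiLp.add_apply, ext0_castSucc, eLast_castSucc, add_zero]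

lemma liftE_last (y : E d) : liftE y (Fin.last d) = 1 := by
  rw [liftE, PiLp.add_apply, ext0_last, eLast_last, zero_add]

lemma PN_liftE (y : E d) : PN (liftE y) = y := by
  ext j
  show liftE y j.castSucc / liftE y (Fin.last d) = y j
  rw [liftE_castSucc, liftE_last, div_one]

lemma liftE_PN {x : E (d+1)} (hx : x (Fin.last d) ≠ 0) :
    liftE (PN x) = (x (Fin.last d))⁻¹ • x := by
  ext i
  induction i using Fin.lastCases with
  | last => rw [liftE_last, PiLp.smul_apply, smul_eq_mul, inv_mul_cancel₀ hx]
  | cast j =>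
      rw [liftE_castSucc, PiLp.smul_apply, smul_eq_mul]
      show x j.castSucc / x (Fin.last d) = _
      rw [div_eq_inv_mul]

lemma norm_liftE_sq (y : E d) : ‖liftE y‖^2 = 1 + ‖y‖^2 := by
  rw [normsq, Fin.sum_univ_castSucc, liftE_last]
  simp only [liftE_castSucc]
  rw [normsq y]; ring

lemma liftE_ne_zero (y : E d) : liftE y ≠ 0 := by
  intro h
  have := liftE_last y
  rw [h] at this
  simp at this

/-- Normalized nonnegative combinations of elements of an arc-closed set stay in the set. -/
lemma normalize_sum_mem {K : Set (E n)}
    (harc : ∀ u ∈ K, ∀ w ∈ K, arcPts u w ⊆ K)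
    {ι : Type} (t : Finset ι) (s : ι → ℝ) (c : ι → E n)
    (hs : ∀ j ∈ t, 0 ≤ s j) (hc : ∀ j ∈ t, c j ∈ K)
    (hv : ∑ j ∈ t, s j • c j ≠ 0) :
    ‖∑ j ∈ t, s j • c j‖⁻¹ • (∑ j ∈ t, s j • c j) ∈ K := by
  classical
  induction t using Finset.induction with
  | empty => simp at hv
  | @insert a t ha IH =>
      rw [Finset.sum_insert ha] at hv ⊢
      by_cases hvt : ∑ j ∈ t, s j • c j = 0
      · rw [hvt, add_zero] at hv ⊢
        have hca := hc a (Finset.mem_insert_self a t)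
        refine harc _ hca _ hca ⟨s a, 0, hs a (Finset.mem_insert_self a t), le_rfl, ?_, ?_⟩
        · simpa using hv
        · simp
      · have hvt' := IH (fun j hj => hs j (Finset.mem_insert_of_mem hj))
          (fun j hj => hc j (Finset.mem_insert_of_mem hj)) hvt
        have hca := hc a (Finset.mem_insert_self a t)
        have hkey : s a • c a + ‖∑ j ∈ t, s j • c j‖ • (‖∑ j ∈ t, s j • c j‖⁻¹ • ∑ j ∈ t, s j • c j)
            = s a • c a + ∑ j ∈ t, s j • c j := by
          rw [smul_inv_smul₀ (norm_ne_zero_iff.2 hvt)]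
        refine harc _ hca _ hvt' ⟨s a, ‖∑ j ∈ t, s j • c j‖,
          hs a (Finset.mem_insert_self a t), norm_nonneg _, ?_, ?_⟩
        · rw [hkey]; exact hv
        · rw [hkey]

/-- The preimage under central projection of a convex set is spherically convex. -/
lemma sphConvex_proj (s : Set (E d)) :
    IsSphConvex {x ∈ unitSphere (d+1) | 0 < x (Fin.last d) ∧ PN x ∈ convexHull ℝ s} := by
  right
  constructor
  · exact ⟨eLast d, fun x hx => by rw [inner_eLast]; exact hx.2.1⟩
  · rintro u hu w hw p ⟨a, b, ha, hb, hz, rfl⟩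
    obtain ⟨husph, hul, huPN⟩ := hu
    obtain ⟨hwsph, hwl, hwPN⟩ := hw
    set z := a • u + b • w with hzdef
    have hzlast : z (Fin.last d) = a * u (Fin.last d) + b * w (Fin.last d) := by
      simp [hzdef, PiLp.add_apply, PiLp.smul_apply]
    have hab : 0 < a ∨ 0 < b := by
      by_contra h
      push_neg at h
      have ha0 : a = 0 := le_antisymm h.1 ha
      have hb0 : b = 0 := le_antisymm h.2 hb
      exact hz (by simp [hzdef, ha0, hb0])
    have hzl : 0 < z (Fin.last d) := by
      rw [hzlast]
      rcases hab with h | h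
      · have : 0 < a * u (Fin.last d) := mul_pos h hul
        nlinarith [mul_nonneg hb hwl.le]
      · have : 0 < b * w (Fin.last d) := mul_pos h hwl
        nlinarith [mul_nonneg ha hul.le]
    have hzn : ‖z‖ ≠ 0 := norm_ne_zero_iff.2 hz
    have hznpos : 0 < ‖z‖ := norm_pos_iff.2 hz
    refine ⟨mem_unitSphere.2 ?_, ?_, ?_⟩
    · rw [norm_smul, norm_inv, norm_norm, inv_mul_cancel₀ hzn]
    · rw [PiLp.smul_apply, smul_eq_mul]
      exact mul_pos (inv_pos.2 hznpos) hzl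
    · rw [PN_smul (inv_ne_zero hzn)]
      have hul' : u (Fin.last d) ≠ 0 := hul.ne'
      have hwl' : w (Fin.last d) ≠ 0 := hwl.ne'
      have hzl' : z (Fin.last d) ≠ 0 := hzl.ne'
      have hrep : PN z = (a * u (Fin.last d) / z (Fin.last d)) • PN u
          + (b * w (Fin.last d) / z (Fin.last d)) • PN w := by
        ext j
        rw [PiLp.add_apply, PiLp.smul_apply, PiLp.smul_apply, smul_eq_mul, smul_eq_mul]
        show z j.castSucc / z (Fin.last d) =
          _ * (u j.castSucc / u (Fin.last d)) + _ * (w j.castSucc / w (Fin.last d))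
        have hzc : z j.castSucc = a * u j.castSucc + b * w j.castSucc := by
          simp [hzdef, PiLp.add_apply, PiLp.smul_apply]
        rw [hzc]
        field_simp
      rw [hrep]
      refine (convex_convexHull ℝ s) huPN hwPN ?_ ?_ ?_
      · exact div_nonneg (mul_nonneg ha hul.le) hzl.le
      · exact div_nonneg (mul_nonneg hb hwl.le) hzl.le
      · rw [← add_div, ← hzlast, div_self hzl']

/-- Direction A: the normalized lift of a point of the `tan ρ` ball lies in the cap. -/
lemma lift_mem_cap {ρ : ℝ} (hρ : ρ ∈ Set.Ioo 0 (Real.pi/2)) {y : E d} (hy : ‖y‖ ≤ Real.tan ρ) :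
    ‖liftE y‖⁻¹ • liftE y ∈ cap (eLast d) ρ := by
  obtain ⟨hρ0, hρ2⟩ := hρ
  have hcos : 0 < Real.cos ρ := Real.cos_pos_of_mem_Ioo ⟨by linarith [Real.pi_pos], hρ2⟩
  have hLpos : 0 < ‖liftE y‖ := norm_pos_iff.2 (liftE_ne_zero y)
  have htan : Real.tan ρ = Real.sin ρ / Real.cos ρ := Real.tan_eq_sin_div_cos ρ
  have hsc : Real.sin ρ ^ 2 + Real.cos ρ ^ 2 = 1 := Real.sin_sq_add_cos_sq ρ
  have htansq : (1 + Real.tan ρ ^ 2) * Real.cos ρ ^ 2 = 1 := by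
    rw [htan]; field_simp; linarith
  have hL2 : ‖liftE y‖^2 * Real.cos ρ ^2 ≤ 1 := by
    rw [norm_liftE_sq]
    nlinarith [sq_nonneg (Real.tan ρ - ‖y‖), norm_nonneg y,
      Real.tan_pos_of_pos_of_lt_pi_div_two hρ0 hρ2]
  constructor
  · rw [mem_unitSphere, norm_smul, norm_inv, norm_norm, inv_mul_cancel₀ hLpos.ne']
  · rw [real_inner_smul_left, inner_eLast, liftE_last, mul_one]
    rw [show ‖liftE y‖⁻¹ = 1 / ‖liftE y‖ by ring, le_div_iff₀ hLpos]
    nlinarith [mul_pos hcos hLpos]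

/-- Direction B: points of the cap have positive height and small projection. -/
lemma cap_height_proj {θ : ℝ} (hθ : θ ∈ Set.Ioo 0 (Real.pi/2)) {u : E (d+1)}
    (hu : u ∈ cap (eLast d) θ) :
    0 < u (Fin.last d) ∧ ‖PN u‖ ≤ Real.tan θ := by
  obtain ⟨hθ0, hθ2⟩ := hθ
  obtain ⟨husph, hucos⟩ := hu
  rw [inner_eLast] at hucos
  have hcos : 0 < Real.cos θ := Real.cos_pos_of_mem_Ioo ⟨by linarith [Real.pi_pos], hθ2⟩
  have hul : 0 < u (Fin.last d) := lt_of_lt_of_le hcos hucos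
  refine ⟨hul, ?_⟩
  have hnu : ‖u‖ = 1 := mem_unitSphere.1 husph
  have h2 : (∑ j : Fin d, u j.castSucc ^ 2) + u (Fin.last d) ^ 2 = 1 := by
    have := normsq u
    rw [hnu, Fin.sum_univ_castSucc] at this
    simpa using this.symm
  have h1 : ‖PN u‖^2 = (∑ j : Fin d, u j.castSucc ^ 2) / u (Fin.last d) ^ 2 := by
    rw [normsq, Finset.sum_div]
    refine Finset.sum_congr rfl fun j _ => ?_
    show (u j.castSucc / u (Fin.last d)) ^ 2 = _
    rw [div_pow]
  have hul1 : u (Fin.last d) ≤ 1 := by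
    nlinarith [Finset.sum_nonneg (fun (j : Fin d) (_ : j ∈ Finset.univ) => sq_nonneg (u j.castSucc))]
  have htan : Real.tan θ = Real.sin θ / Real.cos θ := Real.tan_eq_sin_div_cos θ
  have hsc : Real.sin θ ^ 2 + Real.cos θ ^ 2 = 1 := Real.sin_sq_add_cos_sq θ
  have hsq : ‖PN u‖^2 ≤ Real.tan θ ^ 2 := by
    rw [h1, htan, div_pow, div_le_div_iff₀ (by positivity) (by positivity)]
    nlinarith [mul_self_le_mul_self hcos.le hucos]
  have htannn : 0 ≤ Real.tan θ := (Real.tan_pos_of_pos_of_lt_pi_div_two hθ0 hθ2).le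
  calc ‖PN u‖ = Real.sqrt (‖PN u‖^2) := (Real.sqrt_sq (norm_nonneg _)).symm
    _ ≤ Real.sqrt (Real.tan θ ^ 2) := Real.sqrt_le_sqrt hsq
    _ = Real.tan θ := Real.sqrt_sq htannn

/-- The tangent inequality giving the factor `r/2`. -/
lemma tan_half_le {r ρ : ℝ} (hr : r ∈ Set.Ioc (0:ℝ) 1) (hρ : ρ ∈ Set.Ioo 0 (Real.pi/2)) :
    Real.tan (r/2*ρ) ≤ r * Real.tan ρ := by
  obtain ⟨hr0, hr1⟩ := hr
  obtain ⟨hρ0, hρ2⟩ := hρ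
  have hπ := Real.pi_pos
  set θ := r/2*ρ with hθdef
  have hθ0 : 0 < θ := by positivity
  have hθ3 : θ ≤ Real.pi/3 := by nlinarith
  have hcos : Real.cos (Real.pi/3) ≤ Real.cos θ :=
    Real.cos_le_cos_of_nonneg_of_le_pi hθ0.le (by linarith) hθ3
  rw [Real.cos_pi_div_three] at hcos
  have hcos0 : (0:ℝ) < 1/2 := by norm_num
  have htanθ : Real.tan θ ≤ 2 * θ := by
    rw [Real.tan_eq_sin_div_cos]
    calc Real.sin θ / Real.cos θ ≤ θ / (1/2) :=
          div_le_div₀ hθ0.le (Real.sin_le hθ0.le) hcos0 hcos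
      _ = 2 * θ := by ring
  have hρtan : ρ ≤ Real.tan ρ := Real.le_tan hρ0.le hρ2
  calc Real.tan θ ≤ 2 * θ := htanθ
    _ = r * ρ := by rw [hθdef]; ring
    _ ≤ r * Real.tan ρ := by nlinarith

end Aux

open scoped Pointwise

/-- Spherical QST for sets in the open northern hemisphere, from Euclidean QST. -/
theorem sphericalQST_north (d : ℕ) (r : ℝ) (hr : r ∈ Set.Ioc (0 : ℝ) 1)
    (QST : ∀ Q : Set (E d), Metric.closedBall 0 1 ⊆ convexHull ℝ Q →
      ∃ Q' : Finset (E d), ↑Q' ⊆ Q ∧ Q'.card ≤ 2 * d ∧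
        Metric.closedBall 0 r ⊆ convexHull ℝ (Q' : Set (E d)))
    (C : Set (E (d + 1))) (hC : C ⊆ {x ∈ unitSphere (d + 1) | 0 < x (Fin.last d)})
    (ρ : ℝ) (hρ : ρ ∈ Set.Ioo 0 (Real.pi / 2)) (hcap : cap (eLast d) ρ ⊆ sconv C) :
    ∃ C' : Finset (E (d + 1)), ↑C' ⊆ C ∧ C'.card ≤ 2 * d ∧
      cap (eLast d) (r / 2 * ρ) ⊆ sconv (C' : Set (E (d + 1))) := by
  classical
  obtain ⟨hr0, hr1⟩ := hr
  obtain ⟨hρ0, hρ2⟩ := hρ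
  have hπ := Real.pi_pos
  set T := Real.tan ρ with hT
  have hT0 : 0 < T := Real.tan_pos_of_pos_of_lt_pi_div_two hρ0 hρ2
  -- Direction A: the ball of radius `tan ρ` lies in the hull of the projection of `C`.
  have hA : ∀ w : E d, ‖w‖ ≤ T → w ∈ convexHull ℝ (PN '' C) := by
    intro w hw
    set K : Set (E (d+1)) :=
      {x ∈ unitSphere (d+1) | 0 < x (Fin.last d) ∧ PN x ∈ convexHull ℝ (PN '' C)} with hK
    have hKmem : K ∈ {K : Set (E (d+1)) | IsSphConvex K ∧ K ⊆ unitSphere (d+1) ∧ C ⊆ K} := by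
      refine ⟨sphConvex_proj _, fun x hx => hx.1, fun x hx => ?_⟩
      exact ⟨(hC hx).1, (hC hx).2, subset_convexHull ℝ _ ⟨x, hx, rfl⟩⟩
    have hu : ‖liftE w‖⁻¹ • liftE w ∈ sconv C := hcap (lift_mem_cap ⟨hρ0, hρ2⟩ hw)
    have huK : ‖liftE w‖⁻¹ • liftE w ∈ K := Set.mem_sInter.1 hu K hKmem
    have hPNw : PN (‖liftE w‖⁻¹ • liftE w) = w := by
      rw [PN_smul (inv_ne_zero (norm_ne_zero_iff.2 (liftE_ne_zero w))), PN_liftE]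
    rw [← hPNw]
    exact huK.2.2
  have hball : Metric.closedBall 0 1 ⊆ convexHull ℝ (T⁻¹ • (PN '' C)) := by
    intro y hy
    rw [convexHull_smul]
    refine Set.mem_smul_set.2 ⟨T • y, hA _ ?_, inv_smul_smul₀ hT0.ne' y⟩
    rw [norm_smul, Real.norm_eq_abs, abs_of_pos hT0]
    have hy1 : ‖y‖ ≤ 1 := mem_closedBall_zero_iff.1 hy
    nlinarith
  obtain ⟨Q', hQ'sub, hQ'card, hQ'ball⟩ := QST _ hball
  -- choose preimages in `C` for the points of `Q'`
  have hchoice : ∀ q ∈ Q', ∃ c, c ∈ C ∧ T⁻¹ • PN c = q := by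
    intro q hq
    obtain ⟨x, hx, hxq⟩ := Set.mem_smul_set.1 (hQ'sub hq)
    obtain ⟨c, hc, rfl⟩ := hx
    exact ⟨c, hc, hxq⟩
  set g : E d → E (d+1) := fun q =>
    if h : ∃ c, c ∈ C ∧ T⁻¹ • PN c = q then h.choose else 0 with hg
  have hgP : ∀ q ∈ Q', g q ∈ C ∧ T⁻¹ • PN (g q) = q := by
    intro q hq
    have h := hchoice q hq
    simp only [hg, dif_pos h]
    exact h.choose_spec
  refine ⟨Q'.image g, ?_, ?_, ?_⟩
  · intro x hx
    simp only [Finset.coe_image, Set.mem_image, Finset.mem_coe] at hx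
    obtain ⟨q, hq, rfl⟩ := hx
    exact (hgP q hq).1
  · exact le_trans Finset.card_image_le hQ'card
  · -- the main inclusion
    intro u hu
    have hθI : r/2*ρ ∈ Set.Ioo 0 (Real.pi/2) := ⟨by positivity, by nlinarith⟩
    obtain ⟨hul, hPNu⟩ := cap_height_proj hθI hu
    have hPNu' : ‖PN u‖ ≤ r * T := le_trans hPNu (tan_half_le ⟨hr0, hr1⟩ ⟨hρ0, hρ2⟩)
    have hune : u ≠ 0 := by
      intro h
      rw [h] at hul
      simp at hul
    -- `PN u` lies in the hull of the projection of the chosen points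
    have hmem : PN u ∈ convexHull ℝ (PN '' (↑(Q'.image g) : Set (E (d+1)))) := by
      have h1 : T⁻¹ • PN u ∈ Metric.closedBall (0 : E d) r := by
        rw [mem_closedBall_zero_iff, norm_smul, norm_inv, Real.norm_eq_abs, abs_of_pos hT0]
        calc T⁻¹ * ‖PN u‖ ≤ T⁻¹ * (r * T) :=
              mul_le_mul_of_nonneg_left hPNu' (inv_nonneg.2 hT0.le)
          _ = r := by field_simp
      have h2 : (Q' : Set (E d)) ⊆ T⁻¹ • (PN '' (↑(Q'.image g) : Set (E (d+1)))) := by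
        intro q hq
        refine Set.mem_smul_set.2 ⟨PN (g q), ⟨g q, ?_, rfl⟩, (hgP q hq).2⟩
        simp only [Finset.coe_image, Set.mem_image, Finset.mem_coe]
        exact ⟨q, hq, rfl⟩
      have h4 := convexHull_mono h2 (hQ'ball h1)
      rw [convexHull_smul] at h4
      obtain ⟨y, hy, hyx⟩ := Set.mem_smul_set.1 h4
      have hyPN : y = PN u := by
        have := congrArg (fun v : E d => T • v) hyx
        simpa [smul_inv_smul₀ hT0.ne'] using this
      rwa [← hyPN]
    rw [convexHull_eq] at hmem
    obtain ⟨ι, t, w, z, hw0, hw1, hzmem, hcm⟩ := hmem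
    have hsum : ∑ i ∈ t, w i • z i = PN u := by
      rw [← hcm, Finset.centerMass_eq_of_sum_1 _ _ hw1]
    -- choose preimages in `C'` for the `z i`
    set c : ι → E (d+1) := fun i =>
      if h : ∃ x, x ∈ (↑(Q'.image g) : Set (E (d+1))) ∧ PN x = z i then h.choose else 0
      with hcdef
    have hcP : ∀ i ∈ t, c i ∈ (↑(Q'.image g) : Set (E (d+1))) ∧ PN (c i) = z i := by
      intro i hi
      have h : ∃ x, x ∈ (↑(Q'.image g) : Set (E (d+1))) ∧ PN x = z i := by
        obtain ⟨x, hx, hxz⟩ := hzmem i hi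
        exact ⟨x, hx, hxz⟩
      simp only [hcdef, dif_pos h]
      exact h.choose_spec
    have hclpos : ∀ i ∈ t, 0 < (c i) (Fin.last d) := by
      intro i hi
      have hciC : c i ∈ C := by
        have hmem' := (hcP i hi).1
        simp only [Finset.coe_image, Set.mem_image, Finset.mem_coe] at hmem'
        obtain ⟨q, hq, hh⟩ := hmem'
        rw [← hh]
        exact (hgP q hq).1
      exact (hC hciC).2
    -- the nonnegative combination equals `u` up to positive scaling
    have hveq : ∑ i ∈ t, (w i / (c i) (Fin.last d)) • c i = (u (Fin.last d))⁻¹ • u := by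
      have hterm : ∀ i ∈ t, (w i / (c i) (Fin.last d)) • c i = w i • liftE (z i) := by
        intro i hi
        have hl := hclpos i hi
        have hlift : liftE (PN (c i)) = ((c i) (Fin.last d))⁻¹ • c i := liftE_PN hl.ne'
        rw [(hcP i hi).2] at hlift
        rw [hlift, smul_smul, div_eq_mul_inv]
      rw [Finset.sum_congr rfl hterm]
      have hsplit : ∀ i ∈ t, w i • liftE (z i) = w i • ext0 (z i) + w i • eLast d := by
        intro i _
        rw [liftE, smul_add]
      rw [Finset.sum_congr rfl hsplit, Finset.sum_add_distrib, ← Finset.sum_smul, hw1, one_smul]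
      have hext : ∑ i ∈ t, w i • ext0 (z i) = ext0 (PN u) := by
        rw [← hsum, map_sum]
        exact Finset.sum_congr rfl fun i _ => (LinearMap.map_smul ext0 (w i) (z i)).symm
      rw [hext, ← liftE, liftE_PN hul.ne']
    have hvne : ∑ i ∈ t, (w i / (c i) (Fin.last d)) • c i ≠ 0 := by
      rw [hveq]
      exact smul_ne_zero (inv_ne_zero hul.ne') hune
    have hufromv : ‖∑ i ∈ t, (w i / (c i) (Fin.last d)) • c i‖⁻¹ •
        (∑ i ∈ t, (w i / (c i) (Fin.last d)) • c i) = u := by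
      rw [hveq, norm_smul, Real.norm_eq_abs, abs_of_pos (inv_pos.2 hul),
        mem_unitSphere.1 hu.1, mul_one, smul_smul, inv_inv, mul_inv_cancel₀ hul.ne', one_smul]
    refine Set.mem_sInter.2 fun K hK => ?_
    obtain ⟨hKconv, hKsub, hKC⟩ := hK
    rcases hKconv with h | ⟨_, harc⟩
    · rw [h]
      exact hu.1
    · have hres := normalize_sum_mem harc t (fun i => w i / (c i) (Fin.last d)) c
        (fun i hi => div_nonneg (hw0 i hi) (hclpos i hi).le)
        (fun i hi => hKC (hcP i hi).1) hvne
      rwa [hufromv] at hres
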